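/- Let f define an ABC scoring rule, let P(v) be a poset partial vote over C (a partition Top(v), Middle(v), Bottom(v) with a partial order ≻_v on Middle(v)), and let W, W' ⊆ C with |W| = |W'| = k. Set S = Middle(v) ∩ (W ∪ W') and let R ⊆ S. Let R' = {c ∈ Middle(v) : c ∈ R, or c ≻_v c* for some c* ∈ R (via a chain in ≻_v)}, and assume R' ∩ (S ∖ R) = ∅. Let T = {c ∈ Middle(v) ∖ (S ∪ R') : there is no c' ∈ S ∖ R with c' ≻_v c}, and let c_1, …, c_t be an enumeration of T such that c_i ≻_v c_j implies i < j. For 0 ≤ j ≤ t define A_j(v) = Top(v) ∪ R' ∪ {c_1, …, c_j}. Then each A_j(v) is a completion of P(v) with A_j(v) ∩ S ∩ Middle(v) = R, and the maximum of f(|A(v) ∩ W'|, |A(v)|) − f(|A(v) ∩ W|, |A(v)|) over all completions A(v) of P(v) satisfying Middle(v) ∩ A(v) ∩ S = R is attained among A_0(v), …, A_t(v), i.e., it equals max over 0 ≤ j ≤ t of f(|A_j(v) ∩ W'|, |A_j(v)|) − f(|A_j(v) ∩ W|, |A_j(v)|). -/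

import Mathlib

open Finset

variable {C : Type*}

/-- `Av` is a completion of a single poset partial vote with top set `Top`,
middle set `Mid` and partial order `pref` on `Mid`. -/
def IsVoteCompletion [DecidableEq C] (Top Mid : Finset C) (pref : C → C → Prop)
    (Av : Finset C) : Prop :=
  Top ⊆ Av ∧ Av ⊆ Top ∪ Mid ∧ ∀ c c', pref c c' → c' ∈ Av → c ∈ Av

theorem stmt10 [Fintype C] [DecidableEq C]
    (f : ℕ → ℕ → ℝ) (hf : ∀ x x' y, x' ≤ x → f x' y ≤ f x y)
    (k : ℕ) (Top Mid Bot : Finset C) (pref : C → C → Prop)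
    (hpart : Top ∪ Mid ∪ Bot = Finset.univ)
    (hTM : Disjoint Top Mid) (hTB : Disjoint Top Bot) (hMB : Disjoint Mid Bot)
    (hdom : ∀ c c', pref c c' → c ∈ Mid ∧ c' ∈ Mid)
    (htrans : Transitive pref)
    (hanti : ∀ c c', pref c c' → pref c' c → c = c')
    (W W' : Finset C) (hW : W.card = k) (hW' : W'.card = k)
    (S : Finset C) (hS : S = Mid ∩ (W ∪ W'))
    (R : Finset C) (hR : R ⊆ S)
    -- `R'` consists of the candidates in `Mid` approved whenever `R` is approved
    (R' : Finset C)
    (hR' : ∀ c, c ∈ R' ↔ c ∈ Mid ∧ (c ∈ R ∨ ∃ cs ∈ R, pref c cs))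
    (hfeas : R' ∩ (S \ R) = ∅)
    -- `T` consists of the remaining candidates approvable without touching `S ∖ R`
    (T : Finset C)
    (hT : ∀ c, c ∈ T ↔ (c ∈ Mid ∧ c ∉ S ∪ R') ∧ ∀ c' ∈ S \ R, ¬ pref c' c)
    -- `L = [c_1, …, c_t]` is a topological sorting of `T` w.r.t. `pref`
    (L : List C) (hLnd : L.Nodup) (hLT : L.toFinset = T)
    (htopo : ∀ i j : Fin L.length, i ≠ j → pref (L.get i) (L.get j) → (i : ℕ) < (j : ℕ)) :
    (∀ j ≤ L.length,
        IsVoteCompletion Top Mid pref (Top ∪ R' ∪ (L.take j).toFinset) ∧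
        (Top ∪ R' ∪ (L.take j).toFinset) ∩ S ∩ Mid = R) ∧
    IsGreatest {d : ℝ | ∃ Av : Finset C, IsVoteCompletion Top Mid pref Av ∧
        Mid ∩ Av ∩ S = R ∧
        d = f ((Av ∩ W').card) Av.card - f ((Av ∩ W).card) Av.card}
      ((Finset.range (L.length + 1)).sup' Finset.nonempty_range_add_one
        (fun j => f (((Top ∪ R' ∪ (L.take j).toFinset) ∩ W').card)
                    (Top ∪ R' ∪ (L.take j).toFinset).card -
                  f (((Top ∪ R' ∪ (L.take j).toFinset) ∩ W).card)
                    (Top ∪ R' ∪ (L.take j).toFinset).card)) := by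
  -- basic facts
  have hSMid : S ⊆ Mid := by rw [hS]; exact inter_subset_left
  have hRMid : R ⊆ Mid := hR.trans hSMid
  have hR'Mid : R' ⊆ Mid := fun c hc => ((hR' c).1 hc).1
  have hTMid : T ⊆ Mid := fun c hc => ((hT c).1 hc).1.1
  have hRR' : R ⊆ R' := fun c hc => (hR' c).2 ⟨hRMid hc, Or.inl hc⟩
  have hTnS : ∀ c ∈ T, c ∉ S := fun c hc h =>
    ((hT c).1 hc).1.2 (mem_union_left _ h)
  have hTnR' : ∀ c ∈ T, c ∉ R' := fun c hc h =>
    ((hT c).1 hc).1.2 (mem_union_right _ h)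
  have hTnWW' : ∀ c ∈ T, c ∉ W ∪ W' := fun c hc h =>
    hTnS c hc (by rw [hS]; exact mem_inter.mpr ⟨hTMid hc, h⟩)
  have hR'S : ∀ c, c ∈ R' → c ∈ S → c ∈ R := by
    intro c h1 h2
    by_contra h3
    have : c ∈ R' ∩ (S \ R) := mem_inter.mpr ⟨h1, mem_sdiff.mpr ⟨h2, h3⟩⟩
    rw [hfeas] at this
    exact absurd this (notMem_empty c)
  have hAsubT : ∀ j, (L.take j).toFinset ⊆ T := by
    intro j c hc
    rw [List.mem_toFinset] at hc
    rw [← hLT, List.mem_toFinset]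
    exact (L.take_sublist j).subset hc
  -- closure of each `A_j` under `pref`
  have hclose : ∀ j, ∀ c c', pref c c' → c' ∈ Top ∪ R' ∪ (L.take j).toFinset →
      c ∈ Top ∪ R' ∪ (L.take j).toFinset := by
    intro j c c' hp hc'
    have hcMid := (hdom c c' hp).1
    have hc'Mid := (hdom c c' hp).2
    rcases mem_union.mp hc' with hc' | hc'
    · rcases mem_union.mp hc' with hc' | hc'
      · exact absurd hc'Mid (disjoint_left.mp hTM hc')
      · -- c' ∈ R'
        rcases ((hR' c').1 hc').2 with h | ⟨cs, hcs, hpcs⟩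
        · exact mem_union_left _ (mem_union_right _
            ((hR' c).2 ⟨hcMid, Or.inr ⟨c', h, hp⟩⟩))
        · exact mem_union_left _ (mem_union_right _
            ((hR' c).2 ⟨hcMid, Or.inr ⟨cs, hcs, htrans hp hpcs⟩⟩))
    · -- c' ∈ (L.take j).toFinset
      have hc'T : c' ∈ T := hAsubT j (List.mem_toFinset.mpr (List.mem_toFinset.mp hc'))
      by_cases hcR' : c ∈ R'
      · exact mem_union_left _ (mem_union_right _ hcR')
      have hcS : c ∉ S := by
        intro hcS
        by_cases hcR : c ∈ R
        · exact hcR' (hRR' hcR)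
        · exact ((hT c').1 hc'T).2 c (mem_sdiff.mpr ⟨hcS, hcR⟩) hp
      have hcT : c ∈ T := by
        rw [hT]
        refine ⟨⟨hcMid, ?_⟩, ?_⟩
        · intro h
          rcases mem_union.mp h with h | h
          · exact hcS h
          · exact hcR' h
        · intro c'' hc'' hp''
          exact ((hT c').1 hc'T).2 c'' hc'' (htrans hp'' hp)
      -- use the topological sorting
      have hcL : c ∈ L := by rw [← List.mem_toFinset, hLT]; exact hcT
      rw [List.mem_toFinset] at hc'
      obtain ⟨i', hi', hgi'⟩ := List.mem_take_iff_getElem.mp hc'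
      obtain ⟨i, hi, hgi⟩ := List.mem_iff_getElem.mp hcL
      have hmemtake : c ∈ L.take j := by
        by_cases hii : i = i'
        · subst hii
          rw [← hgi, hgi']
          exact hc'
        · have hlt : i < i' := by
            have := htopo ⟨i, hi⟩ ⟨i', lt_of_lt_of_le hi' (min_le_right _ _)⟩
              (by simp [Fin.ext_iff, hii])
              (by simpa [List.get_eq_getElem, hgi, hgi'] using hp)
            simpa using this
          exact List.mem_take_iff_getElem.mpr
            ⟨i, lt_min (lt_of_lt_of_le hlt (le_of_lt (lt_min_iff.mp hi').1)) hi, hgi⟩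
      exact mem_union_right _ (List.mem_toFinset.mpr hmemtake)
  -- `A_j ∩ S ∩ Mid = R`
  have hAS : ∀ j, (Top ∪ R' ∪ (L.take j).toFinset) ∩ S ∩ Mid = R := by
    intro j
    ext c
    simp only [mem_inter, mem_union]
    constructor
    · rintro ⟨⟨(h1 | h1) | h1, h2⟩, h3⟩
      · exact absurd h3 (disjoint_left.mp hTM h1)
      · exact hR'S c h1 h2
      · exact absurd h2 (hTnS c (hAsubT j h1))
    · intro hc
      exact ⟨⟨Or.inl (Or.inr (hRR' hc)), hR hc⟩, hRMid hc⟩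
  have key : ∀ j ≤ L.length,
      IsVoteCompletion Top Mid pref (Top ∪ R' ∪ (L.take j).toFinset) ∧
      (Top ∪ R' ∪ (L.take j).toFinset) ∩ S ∩ Mid = R := by
    intro j hj
    refine ⟨⟨subset_union_left.trans subset_union_left, ?_, hclose j⟩, hAS j⟩
    exact union_subset
      (union_subset subset_union_left (hR'Mid.trans subset_union_right))
      ((hAsubT j).trans (hTMid.trans subset_union_right))
  -- disjointness and cards
  have hdisjT : Disjoint (Top ∪ R') T := by
    rw [disjoint_right]
    intro c hcT h
    rcases mem_union.mp h with h | h
    · exact disjoint_left.mp hTM h (hTMid hcT)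
    · exact hTnR' c hcT h
  have hcard : ∀ j ≤ L.length,
      (Top ∪ R' ∪ (L.take j).toFinset).card = (Top ∪ R').card + j := by
    intro j hj
    rw [card_union_of_disjoint (hdisjT.mono_right (hAsubT j)),
      List.toFinset_card_of_nodup (hLnd.sublist (L.take_sublist j)),
      List.length_take, min_eq_left hj]
  -- intersections with W, W' don't depend on the chosen completion
  have hIW : ∀ (X : Finset C), Top ∪ R' ⊆ X → X ⊆ Top ∪ R' ∪ T →
      ∀ V0 ⊆ W ∪ W', X ∩ V0 = (Top ∪ R') ∩ V0 := by
    intro X h1 h2 V0 hV0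
    ext c
    simp only [mem_inter]
    constructor
    · rintro ⟨hc, hcv⟩
      refine ⟨?_, hcv⟩
      rcases mem_union.mp (h2 hc) with h | h
      · exact h
      · exact absurd (hV0 hcv) (hTnWW' c h)
    · rintro ⟨hc, hcv⟩
      exact ⟨h1 hc, hcv⟩
  have hAjbig : ∀ j, Top ∪ R' ∪ (L.take j).toFinset ⊆ Top ∪ R' ∪ T :=
    fun j => union_subset_union_right (hAsubT j)
  refine ⟨key, ?_, ?_⟩
  · -- the sup is attained by some completion
    obtain ⟨j, hjmem, hjeq⟩ := Finset.exists_mem_eq_sup' Finset.nonempty_range_add_one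
      (fun j => f (((Top ∪ R' ∪ (L.take j).toFinset) ∩ W').card)
                    (Top ∪ R' ∪ (L.take j).toFinset).card -
                  f (((Top ∪ R' ∪ (L.take j).toFinset) ∩ W).card)
                    (Top ∪ R' ∪ (L.take j).toFinset).card)
    have hj : j ≤ L.length := Nat.lt_succ_iff.mp (mem_range.mp hjmem)
    refine ⟨Top ∪ R' ∪ (L.take j).toFinset, (key j hj).1, ?_, hjeq⟩
    rw [inter_comm Mid, inter_right_comm]
    exact (key j hj).2
  · -- upper bound
    rintro d ⟨Av, ⟨hTopAv, hAvTM, hclAv⟩, hAvR, rfl⟩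
    have hRAv : R ⊆ Av := by
      intro c hc
      rw [← hAvR] at hc
      exact (mem_inter.mp (mem_inter.mp hc).1).2
    have hR'Av : R' ⊆ Av := by
      intro c hc
      rcases ((hR' c).1 hc).2 with h | ⟨cs, hcs, hp⟩
      · exact hRAv h
      · exact hclAv c cs hp (hRAv hcs)
    have hsub1 : Top ∪ R' ⊆ Av := union_subset hTopAv hR'Av
    have hsub2 : Av ⊆ Top ∪ R' ∪ T := by
      intro c hc
      rcases mem_union.mp (hAvTM hc) with h | h
      · exact mem_union_left _ (mem_union_left _ h)
      by_cases hcS : c ∈ S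
      · have hcR : c ∈ R := by
          rw [← hAvR]
          exact mem_inter.mpr ⟨mem_inter.mpr ⟨h, hc⟩, hcS⟩
        exact mem_union_left _ (mem_union_right _ (hRR' hcR))
      by_cases hcR' : c ∈ R'
      · exact mem_union_left _ (mem_union_right _ hcR')
      refine mem_union_right _ ((hT c).2 ⟨⟨h, ?_⟩, ?_⟩)
      · intro hmem
        rcases mem_union.mp hmem with h' | h'
        · exact hcS h'
        · exact hcR' h'
      · intro c'' hc'' hp
        have hc''S := (mem_sdiff.mp hc'').1
        have hc''Av := hclAv c'' c hp hc
        have : c'' ∈ R := by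
          rw [← hAvR]
          exact mem_inter.mpr ⟨mem_inter.mpr ⟨hSMid hc''S, hc''Av⟩, hc''S⟩
        exact (mem_sdiff.mp hc'').2 this
    have hTcard : T.card = L.length := by
      rw [← hLT, List.toFinset_card_of_nodup hLnd]
    have hub : Av.card ≤ (Top ∪ R').card + L.length := by
      calc Av.card ≤ (Top ∪ R' ∪ T).card := card_le_card hsub2
        _ = (Top ∪ R').card + L.length := by
            rw [card_union_of_disjoint hdisjT, hTcard]
    have hlb : (Top ∪ R').card ≤ Av.card := card_le_card hsub1
    set j := Av.card - (Top ∪ R').card with hjdef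
    have hjle : j ≤ L.length := by omega
    have hjcard : Av.card = (Top ∪ R').card + j := by omega
    have hcardeq : Av.card = (Top ∪ R' ∪ (L.take j).toFinset).card := by
      rw [hcard j hjle]; exact hjcard
    have hAW : Av ∩ W = (Top ∪ R' ∪ (L.take j).toFinset) ∩ W := by
      rw [hIW Av hsub1 hsub2 W subset_union_left,
        hIW _ subset_union_left (hAjbig j) W subset_union_left]
    have hAW' : Av ∩ W' = (Top ∪ R' ∪ (L.take j).toFinset) ∩ W' := by
      rw [hIW Av hsub1 hsub2 W' subset_union_right,
        hIW _ subset_union_left (hAjbig j) W' subset_union_right]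
    rw [hAW, hAW', hcardeq]
    exact Finset.le_sup'
      (fun j => f (((Top ∪ R' ∪ (L.take j).toFinset) ∩ W').card)
                    (Top ∪ R' ∪ (L.take j).toFinset).card -
                  f (((Top ∪ R' ∪ (L.take j).toFinset) ∩ W).card)
                    (Top ∪ R' ∪ (L.take j).toFinset).card)
      (mem_range.mpr (Nat.lt_succ_of_le hjle))
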